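/- Every ωOPN with reset arcs (ωOPN+R) can be transformed into an ωOPN with transfer arcs (ωOPN+T) that terminates iff the original net terminates, by replacing each reset of a place p with a transfer of p's tokens into a fresh sink place p_trash from which no transition consumes. -/
import Mathlib


/-- A special arc of an extended net: a reset of a place, or a transfer from a
source place to a target place. -/
inductive Special (P : Type) where
  | reset (p : P)
  | transfer (src tgt : P)

/-- An ω-output Petri net with (at most one per transition) reset or transfer
arcs: inputs are plain naturals (no ω-input arcs), outputs lie in ℕ ∪ {ω}. -/
structure EPN (P : Type) where
  T : Type
  I : T → P → ℕ
  O : T → P → WithTop ℕ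
  sp : T → Option (Special P)
  init : P → ℕ

namespace EPN

variable {P : Type}

/-- Concrete firing of a transition of an extended net. -/
def Fires (N : EPN P) (t : N.T) (m m' : P → ℕ) : Prop :=
  ∃ o : P → ℕ,
    (∀ p, N.O t p ≠ ⊤ → ((o p : ℕ) : WithTop ℕ) = N.O t p) ∧
    match N.sp t with
    | none =>
        (∀ p, N.I t p ≤ m p) ∧ ∀ p, m' p = m p - N.I t p + o p
    | some (.reset r) =>
        (∀ p, p ≠ r → N.I t p ≤ m p) ∧
        m' r = o r ∧ ∀ p, p ≠ r → m' p = m p - N.I t p + o p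
    | some (.transfer s tg) =>
        s ≠ tg ∧
        (∀ p, p ≠ s → N.I t p ≤ m p) ∧
        m' s = o s ∧ m' tg = m tg - N.I t tg + o tg + m s ∧
        ∀ p, p ≠ s → p ≠ tg → m' p = m p - N.I t p + o p

/-- The net terminates: no infinite execution from the initial marking. -/
def Terminates (N : EPN P) : Prop :=
  ¬ ∃ (ts : ℕ → N.T) (ms : ℕ → P → ℕ), ms 0 = N.init ∧
      ∀ n : ℕ, N.Fires (ts n) (ms n) (ms (n + 1))

/-- The net only uses reset special arcs (an ωOPN+R). -/
def IsResetNet (N : EPN P) : Prop :=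
  ∀ (t : N.T) (s tg : P), N.sp t ≠ some (.transfer s tg)

/-- The net only uses transfer special arcs (an ωOPN+T). -/
def IsTransferNet (N : EPN P) : Prop :=
  ∀ (t : N.T) (r : P), N.sp t ≠ some (.reset r)

/-- Replace every reset of a place `p` by a transfer of `p`'s tokens into a
fresh sink place `p_trash` (the `Sum.inr` place), from which no transition
consumes; everything else is unchanged. -/
def toTransfer (N : EPN P) : EPN (P ⊕ Unit) where
  T := N.T
  I := fun t q => match q with | .inl p => N.I t p | .inr _ => 0
  O := fun t q => match q with | .inl p => N.O t p | .inr _ => 0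
  sp := fun t =>
    match N.sp t with
    | none => none
    | some (.reset p) => some (.transfer (Sum.inl p) (Sum.inr ()))
    | some (.transfer s tg) => some (.transfer (Sum.inl s) (Sum.inl tg))
  init := fun q => match q with | .inl p => N.init p | .inr _ => 0

/-- Tokens accumulated in the trash place along a run. -/
def trash (N : EPN P) (ts : ℕ → N.T) (ms : ℕ → P → ℕ) : ℕ → ℕ
  | 0 => 0
  | n + 1 =>
      trash N ts ms n +
        (match N.sp (ts n) with
         | some (.reset p) => ms n p
         | _ => 0)

/-- Every ωOPN+R can be transformed into an ωOPN+T which terminates iff the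
original net terminates. -/
theorem reset_to_transfer (N : EPN P) (hres : N.IsResetNet) :
    (toTransfer N).IsTransferNet ∧ (N.Terminates ↔ (toTransfer N).Terminates) := by
  constructor
  · -- IsTransferNet
    intro t r h
    rcases hsp : N.sp t with _ | (p | ⟨s, tg⟩) <;>
      simp only [toTransfer, hsp] at h <;> simp at h
  constructor
  · -- N.Terminates → (toTransfer N).Terminates
    intro hN
    rintro ⟨ts, ms', h0, hf⟩
    apply hN
    refine ⟨ts, fun n p => ms' n (Sum.inl p), funext fun p => by show ms' 0 (Sum.inl p) = _; rw [h0]; rfl, ?_⟩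
    intro n
    obtain ⟨o, ho, hrest⟩ := hf n
    refine ⟨fun p => o (Sum.inl p), fun p hp => ho (Sum.inl p) hp, ?_⟩
    rcases hsp : N.sp (ts n) with _ | (p | ⟨s, tg⟩)
    · simp only [toTransfer, hsp] at hrest
      exact ⟨fun q => hrest.1 (Sum.inl q), fun q => hrest.2 (Sum.inl q)⟩
    · simp only [toTransfer, hsp] at hrest
      obtain ⟨-, hen, hs, -, hoth⟩ := hrest
      exact ⟨fun q hq => hen (Sum.inl q) (by simpa using hq), hs,
        fun q hq => hoth (Sum.inl q) (by simpa using hq) (by simp)⟩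
    · exact absurd hsp (hres (ts n) s tg)
  · -- (toTransfer N).Terminates → N.Terminates
    intro hT
    rintro ⟨ts, ms, h0, hf⟩
    apply hT
    refine ⟨ts, fun n => Sum.elim (ms n) (fun _ => trash N ts ms n), ?_, ?_⟩
    · funext q
      rcases q with p | u
      · simp [h0, toTransfer]
      · simp [trash, toTransfer]
    intro n
    obtain ⟨o, ho, hrest⟩ := hf n
    refine ⟨Sum.elim o (fun _ => 0), ?_, ?_⟩
    · rintro (p | u) hp
      · exact ho p hp
      · simp [toTransfer]
    · rcases hsp : N.sp (ts n) with _ | (p | ⟨s, tg⟩)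
      · rw [hsp] at hrest
        simp only [toTransfer, hsp]
        refine ⟨?_, ?_⟩
        · rintro (q | u)
          · exact hrest.1 q
          · simp
        · rintro (q | u)
          · simpa using hrest.2 q
          · simp [trash, hsp]
      · rw [hsp] at hrest
        obtain ⟨hen, hr, hoth⟩ := hrest
        simp only [toTransfer, hsp]
        refine ⟨by simp, ?_, by simpa using hr, ?_, ?_⟩
        · rintro (q | u) hq
          · exact hen q (by simpa using hq)
          · simp
        · simp [trash, hsp]
        · rintro (q | u) hq hq'
          · simpa using hoth q (by simpa using hq)
          · exact absurd rfl hq'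
      · exact absurd hsp (hres (ts n) s tg)

end EPN
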